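/- There exist morphisms α, β : Id → Y in Eq(Π⁰₁) whose coequalizer in Eq is properly Σ⁰₂ (Σ⁰₂ but not Π⁰₁); hence Eq(Π⁰₁) is not closed under coequalizers computed in Eq. -/

import Mathlib

/-- `f` is `(R,S)`-equivalence preserving. -/
def EqvPres (R S : Setoid ℕ) (f : ℕ → ℕ) : Prop :=
  ∀ x y, R.r x y → S.r (f x) (f y)

/-- `α` is a morphism of the category `Eq` from `R` to `S`: a map on quotients
induced by a computable equivalence-preserving function. -/
def IsMor (R S : Setoid ℕ) (α : Quotient R → Quotient S) : Prop :=
  ∃ f : ℕ → ℕ, Computable f ∧ EqvPres R S f ∧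
    ∀ x, α (Quotient.mk R x) = Quotient.mk S (f x)

/-- The equivalence relation generated by a binary relation on ℕ. -/
def genSetoid (r : ℕ → ℕ → Prop) : Setoid ℕ :=
  ⟨Relation.EqvGen r, Relation.EqvGen.is_equivalence r⟩

/-- The relation generating the coequalizer: `Y` together with the pairs `(f₁ x, f₂ x)`. -/
def coeqRel (Y : Setoid ℕ) (f₁ f₂ : ℕ → ℕ) : ℕ → ℕ → Prop :=
  fun u v => Y.r u v ∨ ∃ x, u = f₁ x ∧ v = f₂ x

/-- A set of naturals is Π⁰₁ if its complement is c.e. -/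
def Pi01Set (A : Set ℕ) : Prop := REPred fun n => n ∉ A

/-- An equivalence relation is Π⁰₁ (a coceer) if its graph is co-c.e. -/
def CoCE (R : Setoid ℕ) : Prop := REPred fun p : ℕ × ℕ => ¬ R.r p.1 p.2

/-- The Σ⁰ₙ levels of the arithmetical hierarchy for subsets of ℕ. -/
def SigmaN : ℕ → (ℕ → Prop) → Prop
  | 0, p => ComputablePred p
  | n + 1, p => ∃ q : ℕ → Prop, SigmaN n (fun x => ¬ q x) ∧ ∀ x, p x ↔ ∃ y, q (Nat.pair x y)

/-- An equivalence relation is Σ⁰ₙ if its graph (coded via Cantor pairing) is Σ⁰ₙ. -/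
def SigmaNRel (n : ℕ) (R : Setoid ℕ) : Prop :=
  SigmaN n fun c => R.r c.unpair.1 c.unpair.2

/-- The identity (equality) equivalence relation on ℕ. -/
def idSetoid : Setoid ℕ := ⟨Eq, eq_equivalence⟩

open Nat.Partrec (Code)
open Nat.Partrec.Code

/-- Stage-`s` halting check for the `n`-th code on input `0`. -/
def hB (n s : ℕ) : Bool := (evaln s (Denumerable.ofNat Code n) 0).isSome

/-- The halting set (on input 0). -/
def Kp (n : ℕ) : Prop := ((Denumerable.ofNat Code n).eval 0).Dom

theorem Kp_iff (n : ℕ) : Kp n ↔ ∃ s, hB n s = true := by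
  unfold Kp hB
  rw [Part.dom_iff_mem]
  constructor
  · rintro ⟨a, ha⟩
    obtain ⟨k, hk⟩ := evaln_complete.1 ha
    exact ⟨k, by simp [Option.isSome_iff_exists]; exact ⟨a, hk⟩⟩
  · rintro ⟨s, hs⟩
    rw [Option.isSome_iff_exists] at hs
    obtain ⟨a, ha⟩ := hs
    exact ⟨a, evaln_complete.2 ⟨s, ha⟩⟩

theorem hB_comp : Computable₂ hB := by
  unfold hB
  have h1 : Primrec fun p : ℕ × ℕ => evaln p.2 (Denumerable.ofNat Code p.1) 0 :=
    primrec_evaln.comp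
      ((Primrec.snd.pair ((Primrec.ofNat Code).comp Primrec.fst)).pair (Primrec.const 0))
  exact (Primrec.option_isSome.comp h1).to_comp

/-- Our two computable maps. -/
def F1 (x : ℕ) : ℕ := cond (hB x.unpair.1 x.unpair.2) (x.unpair.1 + 1) 0
def F2 (_ : ℕ) : ℕ := 0

theorem F1_comp : Computable F1 :=
  Computable.cond
    (hB_comp.comp (Computable.fst.comp Computable.unpair) (Computable.snd.comp Computable.unpair))
    (Computable.succ.comp (Computable.fst.comp Computable.unpair)) (Computable.const 0)

/-- `A u` : `u` is in the class of `0`. -/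
def Ap (u : ℕ) : Prop := u = 0 ∨ ∃ s, hB (u - 1) s = true

theorem Ap_zero : Ap 0 := Or.inl rfl

/-- Characterization of the generated equivalence. -/
theorem gen_char (u v : ℕ) :
    Relation.EqvGen (coeqRel idSetoid F1 F2) u v ↔ (u = v ∨ (Ap u ∧ Ap v)) := by
  constructor
  · intro h
    induction h with
    | rel a b hab =>
      rcases hab with h | ⟨x, hx1, hx2⟩
      · exact Or.inl h
      · refine Or.inr ⟨?_, Or.inl hx2⟩
        rw [hx1]; unfold F1 Ap
        cases hh : hB x.unpair.1 x.unpair.2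
        · simp only [cond_false]; exact Or.inl trivial
        · simp only [cond_true]
          exact Or.inr ⟨x.unpair.2, by simpa using hh⟩
    | refl a => exact Or.inl rfl
    | symm a b _ ih =>
      rcases ih with h | ⟨h1, h2⟩
      · exact Or.inl h.symm
      · exact Or.inr ⟨h2, h1⟩
    | trans a b c _ _ ih1 ih2 =>
      rcases ih1 with h | ⟨h1, h2⟩
      · rw [h]; exact ih2
      · rcases ih2 with h' | ⟨h3, h4⟩
        · rw [← h']; exact Or.inr ⟨h1, h2⟩
        · exact Or.inr ⟨h1, h4⟩
  · intro h
    have key : ∀ w, Ap w → Relation.EqvGen (coeqRel idSetoid F1 F2) w 0 := by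
      intro w hw
      rcases hw with rfl | ⟨s, hs⟩
      · exact Relation.EqvGen.refl 0
      · rcases Nat.eq_zero_or_pos w with rfl | hpos
        · exact Relation.EqvGen.refl 0
        · apply Relation.EqvGen.rel
          refine Or.inr ⟨Nat.pair (w - 1) s, ?_, rfl⟩
          unfold F1
          rw [Nat.unpair_pair]
          simp only [hs, cond_true]
          omega
    rcases h with rfl | ⟨h1, h2⟩
    · exact Relation.EqvGen.refl u
    · exact (key u h1).trans _ _ _ ((key v h2).symm _ _)

/-- composing an r.e. predicate with a computable map. -/
theorem REPred.comp' {α β} [Primcodable α] [Primcodable β] {p : β → Prop} (hp : REPred p)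
    {g : α → β} (hg : Computable g) : REPred fun a => p (g a) := by
  unfold REPred at *
  exact hp.comp hg

/-- `Kp` is not computable. -/
theorem Kp_not_computable : ¬ ComputablePred Kp := by
  intro h
  apply ComputablePred.halting_problem 0
  obtain ⟨f, hf, hfe⟩ := ComputablePred.computable_iff.1 h
  refine ComputablePred.computable_iff.2 ⟨fun c => f (Encodable.encode c), hf.comp Computable.encode, ?_⟩
  funext c
  have : Kp (Encodable.encode c) = (f (Encodable.encode c) = true) := congrFun hfe _
  unfold Kp at this
  rwa [Denumerable.ofNat_encode] at this

/-- `Kp` is r.e. -/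
theorem Kp_re : REPred Kp :=
  REPred.comp' (ComputablePred.halting_problem_re 0) (Computable.ofNat Code)

/-- The bool-valued Σ⁰₂ matrix. -/
def Qb (z : ℕ) : Bool :=
  let c := z.unpair.1
  let y := z.unpair.2
  let u := c.unpair.1
  let v := c.unpair.2
  (u == v) || (((u == 0) || hB (u - 1) y.unpair.1) && ((v == 0) || hB (v - 1) y.unpair.2))

theorem Qb_comp : Computable Qb := by
  unfold Qb
  have u1 : Computable fun z : ℕ => z.unpair.1 := Computable.fst.comp Computable.unpair
  have u2 : Computable fun z : ℕ => z.unpair.2 := Computable.snd.comp Computable.unpair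
  have cu : Computable fun z : ℕ => z.unpair.1.unpair.1 := u1.comp u1
  have cv : Computable fun z : ℕ => z.unpair.1.unpair.2 := u2.comp u1
  have ys : Computable fun z : ℕ => z.unpair.2.unpair.1 := u1.comp u2
  have yt : Computable fun z : ℕ => z.unpair.2.unpair.2 := u2.comp u2
  have beq : Computable₂ fun a b : ℕ => a == b := Primrec.beq.to_comp
  have bor : Computable₂ or := Primrec.or.to_comp
  have band : Computable₂ and := Primrec.and.to_comp
  have pred : Computable (Nat.pred) := Primrec.pred.to_comp
  exact bor.comp (beq.comp cu cv)
    (band.comp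
      (bor.comp (beq.comp cu (Computable.const 0)) (hB_comp.comp (pred.comp cu) ys))
      (bor.comp (beq.comp cv (Computable.const 0)) (hB_comp.comp (pred.comp cv) yt)))

theorem Qb_iff (z : ℕ) : Qb z = true ↔
    (z.unpair.1.unpair.1 = z.unpair.1.unpair.2 ∨
      ((z.unpair.1.unpair.1 = 0 ∨ hB (z.unpair.1.unpair.1 - 1) z.unpair.2.unpair.1 = true) ∧
       (z.unpair.1.unpair.2 = 0 ∨ hB (z.unpair.1.unpair.2 - 1) z.unpair.2.unpair.2 = true))) := by
  unfold Qb
  simp [Bool.or_eq_true, Bool.and_eq_true]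

theorem main_sigma2 : SigmaNRel 2 (genSetoid (coeqRel idSetoid F1 F2)) := by
  unfold SigmaNRel
  refine ⟨fun z => Qb z = true, ⟨fun z => ¬ Qb z.unpair.1 = true, ?_, ?_⟩, ?_⟩
  · -- SigmaN 0 (fun x => ¬¬ Qb x.unpair.1 = true)
    show ComputablePred _
    have : ComputablePred fun z : ℕ => Qb z.unpair.1 = true :=
      ComputablePred.computable_iff.2 ⟨fun z => Qb z.unpair.1,
        Qb_comp.comp (Computable.fst.comp Computable.unpair), rfl⟩
    exact this.of_eq (fun z => by tauto)
  · intro x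
    constructor
    · intro hx
      exact ⟨0, by simpa [Nat.unpair_pair] using hx⟩
    · rintro ⟨y, hy⟩
      simpa [Nat.unpair_pair] using hy
  · intro c
    show Relation.EqvGen _ _ _ ↔ _
    rw [gen_char]
    unfold Ap
    constructor
    · rintro (h | ⟨h1, h2⟩)
      · refine ⟨0, (Qb_iff _).2 ?_⟩
        simp only [Nat.unpair_pair]
        exact Or.inl h
      · obtain ⟨s, hs⟩ : ∃ s, c.unpair.1 = 0 ∨ hB (c.unpair.1 - 1) s = true := by
          rcases h1 with h | ⟨s, hs⟩
          exacts [⟨0, Or.inl h⟩, ⟨s, Or.inr hs⟩]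
        obtain ⟨t, ht⟩ : ∃ t, c.unpair.2 = 0 ∨ hB (c.unpair.2 - 1) t = true := by
          rcases h2 with h | ⟨t, ht⟩
          exacts [⟨0, Or.inl h⟩, ⟨t, Or.inr ht⟩]
        refine ⟨Nat.pair s t, (Qb_iff _).2 ?_⟩
        simp only [Nat.unpair_pair]
        exact Or.inr ⟨hs, ht⟩
    · rintro ⟨y, hy⟩
      rw [Qb_iff] at hy
      simp only [Nat.unpair_pair] at hy
      rcases hy with h | ⟨h1, h2⟩
      · exact Or.inl h
      · refine Or.inr ⟨?_, ?_⟩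
        · rcases h1 with h | h
          · exact Or.inl h
          · exact Or.inr ⟨_, h⟩
        · rcases h2 with h | h
          · exact Or.inl h
          · exact Or.inr ⟨_, h⟩

theorem main_not_coce : ¬ CoCE (genSetoid (coeqRel idSetoid F1 F2)) := by
  intro h
  unfold CoCE at h
  have hcomp : REPred fun n : ℕ => ¬ Kp n := by
    have h2 : REPred fun n : ℕ =>
        ¬ (genSetoid (coeqRel idSetoid F1 F2)).r (n + 1, (0:ℕ)).1 (n + 1, (0:ℕ)).2 :=
      REPred.comp' h (Computable.succ.pair (Computable.const 0))
    refine h2.of_eq fun n => ?_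
    show ¬ Relation.EqvGen _ _ _ ↔ _
    rw [gen_char, Kp_iff]
    unfold Ap
    constructor
    · intro hne hK
      exact hne (Or.inr ⟨Or.inr (by simpa using hK), Or.inl rfl⟩)
    · rintro hK (h | ⟨h1, h2⟩)
      · omega
      · rcases h1 with h1 | h1
        · omega
        · exact hK (by simpa using h1)
  exact Kp_not_computable (ComputablePred.computable_iff_re_compl_re'.2 ⟨Kp_re, hcomp⟩)

theorem eq_coce : CoCE idSetoid := by
  unfold CoCE
  have : ComputablePred fun p : ℕ × ℕ => ¬ idSetoid.r p.1 p.2 := by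
    have : ComputablePred fun p : ℕ × ℕ => ¬ (p.1 = p.2) := by
      refine ComputablePred.computable_iff.2 ⟨fun p => !(p.1 == p.2), ?_, ?_⟩
      · exact (Primrec.not.comp (Primrec.beq.comp Primrec.fst Primrec.snd)).to_comp
      · funext p; simp
    exact this.of_eq fun p => by rfl
  exact this.to_re

/-- There are morphisms `α, β : Id → Y` in `Eq(Π⁰₁)`, induced by computable `f₁, f₂`,
whose coequalizer object `Z` in `Eq` (the relation generated by `Y` and the pairs
`(f₁ x, f₂ x)`) is properly Σ⁰₂: it is Σ⁰₂ but not Π⁰₁. Hence `Eq(Π⁰₁)` is not closed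
under coequalizers computed in `Eq`. -/
theorem stmt_15 :
    ∃ (Y : Setoid ℕ) (f₁ f₂ : ℕ → ℕ),
      CoCE idSetoid ∧ CoCE Y ∧
      Computable f₁ ∧ Computable f₂ ∧
      EqvPres idSetoid Y f₁ ∧ EqvPres idSetoid Y f₂ ∧
      SigmaNRel 2 (genSetoid (coeqRel Y f₁ f₂)) ∧
      ¬ CoCE (genSetoid (coeqRel Y f₁ f₂)) := by
  refine ⟨idSetoid, F1, F2, eq_coce, eq_coce, F1_comp, Computable.const 0, ?_, ?_,
    main_sigma2, main_not_coce⟩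
  · intro x y hxy
    show F1 x = F1 y
    cases hxy; rfl
  · intro x y hxy
    rfl
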